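/- Fix n ≥ 1 and real numbers (V_k)_{k ∈ B_n} with V_{2k} + V_{2k+1} ≠ 0 for all 0 ≤ k ≤ 2^{n−1}−1, and suppose H_n and (RH)_{n−1} are invertible. Then for all φ, ψ ∈ ℓ²(B_n): ⟨φ, H_n^{−1} ψ⟩ = ⟨Sφ, (RH)_{n−1}^{−1} Sψ⟩ + ⟨U_f*φ, V_ff^{−1} U_f*ψ⟩, where S = U_e* − V_fe V_ff^{−1} U_f*. -/

import Mathlib

open MeasureTheory ProbabilityTheory Matrix Filter Topology

noncomputable section

/-- Hierarchical (ultrametric) distance on `ℕ₀ = {0,1,2,…}`: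
`d(j,k) = min {r ≥ 0 | ⌊j/2^r⌋ = ⌊k/2^r⌋}`. -/
def hdist (j k : ℕ) : ℕ := sInf {r | j / 2 ^ r = k / 2 ^ r}

lemma hdist_comm (j k : ℕ) : hdist j k = hdist k j := by
  unfold hdist; congr 1; ext r; exact eq_comm

/-- Matrix entry of the hierarchical Laplacian `Δ = ∑_{r ≥ 1} p_r E_r`,
restricted to a block `B_n` (the entry only depends on the hierarchical distance):
`Δ(j,k) = ∑_{r ≥ max(1, d(j,k))} p_r · 2^{-r}`. -/
def lapEntry (p : ℕ → ℝ) (j k : ℕ) : ℝ :=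
  ∑' r : ℕ, if 1 ≤ r ∧ hdist j k ≤ r then p r / 2 ^ r else 0

/-- Matrix entry of the truncated Laplacian `∑_{r = 1}^{m} p_r E_r`. -/
def lapEntryT (p : ℕ → ℝ) (m : ℕ) (j k : ℕ) : ℝ :=
  ∑ r ∈ Finset.Icc 1 m, if hdist j k ≤ r then p r / 2 ^ r else 0

/-- The finite-volume Hamiltonian `H_n = 1_{B_n} (Δ + V) 1_{B_n}`
as a real symmetric `2^n × 2^n` matrix. -/
def Hmat (p : ℕ → ℝ) (v : ℕ → ℝ) (n : ℕ) : Matrix (Fin (2 ^ n)) (Fin (2 ^ n)) ℝ :=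
  fun j k => lapEntry p j k + if j = k then v j else 0

/-- The truncated finite-volume Hamiltonian
`H_{n,m} = 1_{B_n} (∑_{r=1}^m p_r E_r + V) 1_{B_n}`. -/
def HmatT (p : ℕ → ℝ) (v : ℕ → ℝ) (n m : ℕ) : Matrix (Fin (2 ^ n)) (Fin (2 ^ n)) ℝ :=
  fun j k => lapEntryT p m j k + if j = k then v j else 0

lemma Hmat_isHermitian (p : ℕ → ℝ) (v : ℕ → ℝ) (n : ℕ) : (Hmat p v n).IsHermitian := by
  refine Matrix.ext fun j k => ?_
  simp only [conjTranspose_apply, star_trivial, Hmat, lapEntry, hdist_comm (k : ℕ) (j : ℕ)]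
  rcases eq_or_ne j k with h | h
  · subst h; rfl
  · simp [h, h.symm]

lemma HmatT_isHermitian (p : ℕ → ℝ) (v : ℕ → ℝ) (n m : ℕ) : (HmatT p v n m).IsHermitian := by
  refine Matrix.ext fun j k => ?_
  simp only [conjTranspose_apply, star_trivial, HmatT, lapEntryT, hdist_comm (k : ℕ) (j : ℕ)]
  rcases eq_or_ne j k with h | h
  · subst h; rfl
  · simp [h, h.symm]

/-- The site `0 ∈ B_n`. -/
def fin0 (n : ℕ) : Fin (2 ^ n) := ⟨0, Nat.two_pow_pos n⟩

/-- `2k ∈ B_{n+1}` for `k ∈ B_n`. -/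
def dblFin {n : ℕ} (k : Fin (2 ^ n)) : Fin (2 ^ (n + 1)) :=
  ⟨2 * k, by have h := k.isLt; rw [pow_succ]; omega⟩

/-- `2k + 1 ∈ B_{n+1}` for `k ∈ B_n`. -/
def dblFin1 {n : ℕ} (k : Fin (2 ^ n)) : Fin (2 ^ (n + 1)) :=
  ⟨2 * k + 1, by have h := k.isLt; rw [pow_succ]; omega⟩

/-- Hopping sequence `(p_{r+1})_{r ≥ 1}` of the renormalized model. -/
def shiftSeq (p : ℕ → ℝ) : ℕ → ℝ := fun r => p (r + 1)

/-- The renormalized potential `(RV)_k = 2 V_{2k} V_{2k+1}/(V_{2k} + V_{2k+1}) + p_1`. -/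
def renPotM (p : ℕ → ℝ) (v : ℕ → ℝ) : ℕ → ℝ :=
  fun k => 2 * v (2 * k) * v (2 * k + 1) / (v (2 * k) + v (2 * k + 1)) + p 1

/-- The renormalized potential `(RV)_k = (1/(2 V_{2k}) + 1/(2 V_{2k+1}))⁻¹ + p_1`. -/
def renPotH (p : ℕ → ℝ) (v : ℕ → ℝ) : ℕ → ℝ :=
  fun k => (1 / (2 * v (2 * k)) + 1 / (2 * v (2 * k + 1)))⁻¹ + p 1

/-- The isometry `U_e : ℓ²(B_n) → ℓ²(B_{n+1})`, `U_e δ_k = (δ_{2k} + δ_{2k+1})/√2`,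
as a `2^{n+1} × 2^n` matrix. -/
def Uemat (n : ℕ) : Matrix (Fin (2 ^ (n + 1))) (Fin (2 ^ n)) ℝ :=
  fun j k => if (j : ℕ) = 2 * k then (Real.sqrt 2)⁻¹
    else if (j : ℕ) = 2 * k + 1 then (Real.sqrt 2)⁻¹ else 0

/-- The isometry `U_f : ℓ²(B_n) → ℓ²(B_{n+1})`, `U_f δ_k = (δ_{2k} - δ_{2k+1})/√2`,
as a `2^{n+1} × 2^n` matrix. -/
def Ufmat (n : ℕ) : Matrix (Fin (2 ^ (n + 1))) (Fin (2 ^ n)) ℝ :=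
  fun j k => if (j : ℕ) = 2 * k then (Real.sqrt 2)⁻¹
    else if (j : ℕ) = 2 * k + 1 then -(Real.sqrt 2)⁻¹ else 0

/-- The unitary `U = U_e ⊕ U_f : ℓ²(B_n) ⊕ ℓ²(B_n) → ℓ²(B_{n+1})`. -/
def Umat (n : ℕ) : Matrix (Fin (2 ^ (n + 1))) (Fin (2 ^ n) ⊕ Fin (2 ^ n)) ℝ :=
  Matrix.fromCols (Uemat n) (Ufmat n)

/-- `V_ff = V_ee`: multiplication by `(V_{2k} + V_{2k+1})/2` on `ℓ²(B_n)`. -/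
def Vffmat (v : ℕ → ℝ) (n : ℕ) : Matrix (Fin (2 ^ n)) (Fin (2 ^ n)) ℝ :=
  Matrix.diagonal fun k => (v (2 * k) + v (2 * k + 1)) / 2

/-- `V_fe = V_ef`: multiplication by `(V_{2k} - V_{2k+1})/2` on `ℓ²(B_n)`. -/
def Vfemat (v : ℕ → ℝ) (n : ℕ) : Matrix (Fin (2 ^ n)) (Fin (2 ^ n)) ℝ :=
  Matrix.diagonal fun k => (v (2 * k) - v (2 * k + 1)) / 2

/-- The operator `S = U_e^* - V_fe V_ff^{-1} U_f^* : ℓ²(B_{n+1}) → ℓ²(B_n)`. -/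
def Smat (v : ℕ → ℝ) (n : ℕ) : Matrix (Fin (2 ^ n)) (Fin (2 ^ (n + 1))) ℝ :=
  (Uemat n)ᵀ - Vfemat v n * (Vffmat v n)⁻¹ * (Ufmat n)ᵀ

/-- The maximally delocalized vector `φ_n = 2^{-n/2} 1_{B_n}`. -/
def phiVec (n : ℕ) : Fin (2 ^ n) → ℝ := fun _ => (Real.sqrt (2 ^ n))⁻¹

end

noncomputable section
/-- aux -/
def lapD (p : ℕ → ℝ) (d : ℕ) : ℝ := ∑' r : ℕ, if 1 ≤ r ∧ d ≤ r then p r / 2 ^ r else 0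

lemma lapEntry_eq (p : ℕ → ℝ) (j k : ℕ) : lapEntry p j k = lapD p (hdist j k) := rfl

lemma hdist_set_nonempty (j k : ℕ) : {r | j / 2 ^ r = k / 2 ^ r}.Nonempty := by
  refine ⟨j + k, ?_⟩
  have h1 : j < 2 ^ (j + k) := lt_of_lt_of_le (Nat.lt_two_pow_self (n := j)) (Nat.pow_le_pow_right (by norm_num) (by omega))
  have h2 : k < 2 ^ (j + k) := lt_of_lt_of_le (Nat.lt_two_pow_self (n := k)) (Nat.pow_le_pow_right (by norm_num) (by omega))
  simp only [Set.mem_setOf_eq, Nat.div_eq_of_lt h1, Nat.div_eq_of_lt h2]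

lemma hdist_self (j : ℕ) : hdist j j = 0 :=
  Nat.sInf_eq_zero.mpr (Or.inl rfl)

lemma hdist_eq_zero_iff (j k : ℕ) : hdist j k = 0 ↔ j = k := by
  constructor
  · intro h
    have hm := Nat.sInf_mem (hdist_set_nonempty j k)
    rw [show sInf {r | j / 2 ^ r = k / 2 ^ r} = hdist j k from rfl, h] at hm
    simpa using hm
  · rintro rfl; exact hdist_self j

lemma hdist_le_one (j s t : ℕ) (hs : s < 2) (ht : t < 2) :
    hdist (2 * j + s) (2 * j + t) ≤ 1 := by
  apply Nat.sInf_le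
  simp only [Set.mem_setOf_eq, pow_one]
  omega

lemma double_div (j a r : ℕ) (ha : a < 2) : (2 * j + a) / 2 ^ (r + 1) = j / 2 ^ r := by
  rw [pow_succ', ← Nat.div_div_eq_div_mul]
  congr 1
  omega

lemma hdist_double (j k s t : ℕ) (h : j ≠ k) (hs : s < 2) (ht : t < 2) :
    hdist (2 * j + s) (2 * k + t) = hdist j k + 1 := by
  have hd : j / 2 ^ (hdist j k) = k / 2 ^ (hdist j k) := Nat.sInf_mem (hdist_set_nonempty j k)
  apply le_antisymm
  · apply Nat.sInf_le
    simp only [Set.mem_setOf_eq, double_div _ _ _ hs, double_div _ _ _ ht]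
    exact hd
  · apply le_csInf
    · exact hdist_set_nonempty _ _
    · intro r hr
      simp only [Set.mem_setOf_eq] at hr
      match r with
      | 0 => simp only [pow_zero, Nat.div_one] at hr; omega
      | r + 1 =>
        rw [double_div _ _ _ hs, double_div _ _ _ ht] at hr
        have : hdist j k ≤ r := Nat.sInf_le hr
        omega

lemma summable_pow (q : ℕ → ℝ) (hq : Summable q) (C : ℕ → Prop) [DecidablePred C] :
    Summable (fun r => if C r then q r / 2 ^ r else 0) := by
  apply Summable.of_norm_bounded (g := fun r => |q r|) hq.abs
  intro r
  by_cases h : C r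
  · simp only [h, if_true, Real.norm_eq_abs, abs_div, abs_pow, abs_two]
    have h2 : (1 : ℝ) ≤ 2 ^ r := one_le_pow₀ (by norm_num)
    exact div_le_self (abs_nonneg _) h2
  · simp [h]

lemma lapD_shift (p : ℕ → ℝ) (hps : Summable p) (d : ℕ) :
    2 * lapD p (d + 1) = lapD (shiftSeq p) d + (if d = 0 then p 1 else 0) := by
  have hp2 : Summable (fun r => (2 : ℝ) * p r) := hps.mul_left 2
  have hsh : Summable (shiftSeq p) := (summable_nat_add_iff 1).2 hps
  set g : ℕ → ℝ := fun r => if d + 1 ≤ r then (2 * p r) / 2 ^ r else 0 with hgdef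
  set h : ℕ → ℝ := fun r => if d ≤ r then shiftSeq p r / 2 ^ r else 0 with hhdef
  set h' : ℕ → ℝ := fun r => if 1 ≤ r ∧ d ≤ r then shiftSeq p r / 2 ^ r else 0 with hh'def
  have hgs : Summable g := summable_pow _ hp2 _
  have hhs : Summable h := summable_pow _ hsh _
  have hh's : Summable h' := summable_pow _ hsh _
  have e1 : 2 * lapD p (d + 1) = ∑' r, g r := by
    rw [lapD, ← tsum_mul_left]
    apply tsum_congr
    intro r
    by_cases hr : d + 1 ≤ r
    · have h1 : 1 ≤ r ∧ d + 1 ≤ r := ⟨by omega, hr⟩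
      simp only [hgdef]
      rw [if_pos h1, if_pos hr]
      ring
    · have h1 : ¬(1 ≤ r ∧ d + 1 ≤ r) := fun hc => hr hc.2
      simp [hgdef, h1, hr]
      intro hc; omega
  have e2 : ∀ r, g (r + 1) = h r := by
    intro r
    simp only [hgdef, hhdef, shiftSeq]
    rw [if_congr (show d + 1 ≤ r + 1 ↔ d ≤ r by omega) rfl rfl]
    by_cases hr : d ≤ r
    · simp only [hr, if_true, pow_succ]
      ring
    · simp [hr]
  have e3 : ∑' r, g r = ∑' r, h r := by
    rw [Summable.tsum_eq_zero_add hgs]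
    have g0 : g 0 = 0 := by simp [hgdef]
    simp only [e2, g0, zero_add]
  have e4 : ∑' r, h r = h 0 + ∑' r, h' r := by
    rw [Summable.tsum_eq_zero_add hhs, Summable.tsum_eq_zero_add hh's]
    have h'0 : h' 0 = 0 := by simp [hh'def]
    rw [h'0, zero_add]
    congr 1
    apply tsum_congr
    intro r
    simp only [hhdef, hh'def]
    exact if_congr (by omega) rfl rfl
  have h0 : h 0 = if d = 0 then p 1 else 0 := by
    simp only [hhdef, shiftSeq, pow_zero, div_one]
    exact if_congr (by omega) rfl rfl
  rw [e1, e3, e4, h0, lapD]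
  ring

lemma lapD_le_one (p : ℕ → ℝ) (d : ℕ) (hd : d ≤ 1) : lapD p d = lapD p 1 := by
  apply tsum_congr
  intro r
  exact if_congr (by omega) rfl rfl

lemma lapEntry_double (p : ℕ → ℝ) (j k s t : ℕ) (hs : s < 2) (ht : t < 2) :
    lapEntry p (2 * j + s) (2 * k + t) = lapD p (hdist j k + 1) := by
  rcases eq_or_ne j k with rfl | h
  · rw [lapEntry_eq, lapD_le_one _ _ (hdist_le_one j s t hs ht), hdist_self]
  · rw [lapEntry_eq, hdist_double j k s t h hs ht]


lemma csq : ((Real.sqrt 2)⁻¹ : ℝ) * (Real.sqrt 2)⁻¹ = 1 / 2 := by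
  rw [← mul_inv, Real.mul_self_sqrt (by norm_num : (0:ℝ) ≤ 2)]
  norm_num

lemma dblFin_val {n : ℕ} (m : Fin (2 ^ n)) : (dblFin m : ℕ) = 2 * m := rfl

lemma dblFin1_val {n : ℕ} (m : Fin (2 ^ n)) : (dblFin1 m : ℕ) = 2 * m + 1 := rfl

lemma dblFin_inj {n : ℕ} {j k : Fin (2 ^ n)} : dblFin j = dblFin k ↔ j = k := by
  rw [Fin.ext_iff, Fin.ext_iff, dblFin_val, dblFin_val]; omega

lemma dblFin1_inj {n : ℕ} {j k : Fin (2 ^ n)} : dblFin1 j = dblFin1 k ↔ j = k := by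
  rw [Fin.ext_iff, Fin.ext_iff, dblFin1_val, dblFin1_val]; omega

lemma dblFin_ne {n : ℕ} (j k : Fin (2 ^ n)) : dblFin j ≠ dblFin1 k := by
  rw [Ne, Fin.ext_iff, dblFin_val, dblFin1_val]; omega

lemma sum_split {n : ℕ} (f : Fin (2 ^ (n + 1)) → ℝ) :
    ∑ a, f a = ∑ m : Fin (2 ^ n), (f (dblFin m) + f (dblFin1 m)) := by
  classical
  have hb : Function.Bijective (fun x : Fin (2 ^ n) × Fin 2 =>
      (⟨2 * x.1 + x.2, by have h1 := x.1.isLt; have h2 := x.2.isLt; rw [pow_succ]; omega⟩ :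
        Fin (2 ^ (n + 1)))) := by
    rw [Fintype.bijective_iff_injective_and_card]
    refine ⟨?_, by simp [pow_succ]⟩
    rintro ⟨a, s⟩ ⟨b, t⟩ hab
    have h' : 2 * a.val + s.val = 2 * b.val + t.val := congrArg Fin.val hab
    have hs := s.isLt; have ht := t.isLt
    have hav : a.val = b.val ∧ s.val = t.val := by omega
    exact Prod.ext (Fin.ext hav.1) (Fin.ext hav.2)
  rw [← Fintype.sum_bijective _ hb _ f (fun _ => rfl), Fintype.sum_prod_type]
  refine Finset.sum_congr rfl fun m _ => ?_
  rw [Fin.sum_univ_two]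
  congr 1 <;> exact congrArg f (Fin.ext (by simp [dblFin, dblFin1]))

lemma Ue_dbl {n : ℕ} (m k : Fin (2 ^ n)) :
    Uemat n (dblFin m) k = if m = k then (Real.sqrt 2)⁻¹ else 0 := by
  rcases eq_or_ne m k with rfl | h
  · simp [Uemat, dblFin_val]
  · have hv : (m : ℕ) ≠ k := fun hc => h (Fin.ext hc)
    have h1 : ¬((dblFin m : ℕ) = 2 * k) := by rw [dblFin_val]; omega
    have h2 : ¬((dblFin m : ℕ) = 2 * k + 1) := by rw [dblFin_val]; omega
    simp [Uemat, h1, h2, h]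

lemma Ue_dbl1 {n : ℕ} (m k : Fin (2 ^ n)) :
    Uemat n (dblFin1 m) k = if m = k then (Real.sqrt 2)⁻¹ else 0 := by
  have h1 : ¬((dblFin1 m : ℕ) = 2 * k) := by rw [dblFin1_val]; omega
  rcases eq_or_ne m k with rfl | h
  · simp [Uemat, h1, dblFin1_val]
  · have hv : (m : ℕ) ≠ k := fun hc => h (Fin.ext hc)
    have h2 : ¬((dblFin1 m : ℕ) = 2 * k + 1) := by rw [dblFin1_val]; omega
    simp [Uemat, h1, h2, h]

lemma Uf_dbl {n : ℕ} (m k : Fin (2 ^ n)) :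
    Ufmat n (dblFin m) k = if m = k then (Real.sqrt 2)⁻¹ else 0 := by
  rcases eq_or_ne m k with rfl | h
  · simp [Ufmat, dblFin_val]
  · have hv : (m : ℕ) ≠ k := fun hc => h (Fin.ext hc)
    have h1 : ¬((dblFin m : ℕ) = 2 * k) := by rw [dblFin_val]; omega
    have h2 : ¬((dblFin m : ℕ) = 2 * k + 1) := by rw [dblFin_val]; omega
    simp [Ufmat, h1, h2, h]

lemma Uf_dbl1 {n : ℕ} (m k : Fin (2 ^ n)) :
    Ufmat n (dblFin1 m) k = if m = k then -(Real.sqrt 2)⁻¹ else 0 := by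
  have h1 : ¬((dblFin1 m : ℕ) = 2 * k) := by rw [dblFin1_val]; omega
  rcases eq_or_ne m k with rfl | h
  · simp [Ufmat, h1, dblFin1_val]
  · have hv : (m : ℕ) ≠ k := fun hc => h (Fin.ext hc)
    have h2 : ¬((dblFin1 m : ℕ) = 2 * k + 1) := by rw [dblFin1_val]; omega
    simp [Ufmat, h1, h2, h]

lemma compress {n : ℕ} (M : Matrix (Fin (2 ^ (n + 1))) (Fin (2 ^ (n + 1))) ℝ)
    (X Y : Matrix (Fin (2 ^ (n + 1))) (Fin (2 ^ n)) ℝ) (x0 x1 y0 y1 : ℝ)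
    (hX0 : ∀ m k, X (dblFin m) k = if m = k then x0 else 0)
    (hX1 : ∀ m k, X (dblFin1 m) k = if m = k then x1 else 0)
    (hY0 : ∀ m k, Y (dblFin m) k = if m = k then y0 else 0)
    (hY1 : ∀ m k, Y (dblFin1 m) k = if m = k then y1 else 0)
    (j k : Fin (2 ^ n)) :
    (Xᵀ * M * Y) j k =
      x0 * (M (dblFin j) (dblFin k) * y0 + M (dblFin j) (dblFin1 k) * y1) +
      x1 * (M (dblFin1 j) (dblFin k) * y0 + M (dblFin1 j) (dblFin1 k) * y1) := by
  classical
  have hMY : ∀ a, (M * Y) a k = M a (dblFin k) * y0 + M a (dblFin1 k) * y1 := by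
    intro a
    rw [Matrix.mul_apply, sum_split (fun b => M a b * Y b k)]
    have h1 : ∀ m : Fin (2 ^ n),
        M a (dblFin m) * Y (dblFin m) k + M a (dblFin1 m) * Y (dblFin1 m) k =
        (if m = k then M a (dblFin m) * y0 else 0) +
        (if m = k then M a (dblFin1 m) * y1 else 0) := by
      intro m
      rw [hY0, hY1, mul_ite, mul_ite, mul_zero, mul_zero]
    rw [Finset.sum_congr rfl fun m _ => h1 m, Finset.sum_add_distrib,
      Finset.sum_ite_eq' Finset.univ k (fun m => M a (dblFin m) * y0),
      Finset.sum_ite_eq' Finset.univ k (fun m => M a (dblFin1 m) * y1)]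
    simp
  rw [Matrix.mul_assoc, Matrix.mul_apply, sum_split (fun a => Xᵀ j a * (M * Y) a k)]
  have h2 : ∀ m : Fin (2 ^ n), Xᵀ j (dblFin m) * (M * Y) (dblFin m) k +
      Xᵀ j (dblFin1 m) * (M * Y) (dblFin1 m) k =
      (if m = j then x0 * (M * Y) (dblFin m) k else 0) +
      (if m = j then x1 * (M * Y) (dblFin1 m) k else 0) := by
    intro m
    rw [Matrix.transpose_apply, Matrix.transpose_apply, hX0, hX1, ite_mul, ite_mul,
      zero_mul, zero_mul]
  rw [Finset.sum_congr rfl fun m _ => h2 m, Finset.sum_add_distrib,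
    Finset.sum_ite_eq' Finset.univ j (fun m => x0 * (M * Y) (dblFin m) k),
    Finset.sum_ite_eq' Finset.univ j (fun m => x1 * (M * Y) (dblFin1 m) k)]
  simp only [Finset.mem_univ, if_true]
  rw [hMY, hMY]

lemma orth {n : ℕ} (X Y : Matrix (Fin (2 ^ (n + 1))) (Fin (2 ^ n)) ℝ) (x0 x1 y0 y1 : ℝ)
    (hX0 : ∀ m k, X (dblFin m) k = if m = k then x0 else 0)
    (hX1 : ∀ m k, X (dblFin1 m) k = if m = k then x1 else 0)
    (hY0 : ∀ m k, Y (dblFin m) k = if m = k then y0 else 0)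
    (hY1 : ∀ m k, Y (dblFin1 m) k = if m = k then y1 else 0) :
    Xᵀ * Y = (x0 * y0 + x1 * y1) • (1 : Matrix (Fin (2 ^ n)) (Fin (2 ^ n)) ℝ) := by
  have h : Xᵀ * Y = Xᵀ * (1 : Matrix (Fin (2 ^ (n + 1))) (Fin (2 ^ (n + 1))) ℝ) * Y := by
    rw [Matrix.mul_one]
  rw [h]
  ext j k
  rw [compress _ _ _ x0 x1 y0 y1 hX0 hX1 hY0 hY1]
  have e1 : (1 : Matrix (Fin (2 ^ (n + 1))) (Fin (2 ^ (n + 1))) ℝ) (dblFin j) (dblFin k) =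
      if j = k then 1 else 0 := by
    rw [Matrix.one_apply, if_congr dblFin_inj rfl rfl]
  have e2 : (1 : Matrix (Fin (2 ^ (n + 1))) (Fin (2 ^ (n + 1))) ℝ) (dblFin j) (dblFin1 k) = 0 :=
    Matrix.one_apply_ne (dblFin_ne j k)
  have e3 : (1 : Matrix (Fin (2 ^ (n + 1))) (Fin (2 ^ (n + 1))) ℝ) (dblFin1 j) (dblFin k) = 0 :=
    Matrix.one_apply_ne (dblFin_ne k j).symm
  have e4 : (1 : Matrix (Fin (2 ^ (n + 1))) (Fin (2 ^ (n + 1))) ℝ) (dblFin1 j) (dblFin1 k) =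
      if j = k then 1 else 0 := by
    rw [Matrix.one_apply, if_congr dblFin1_inj rfl rfl]
  rw [e1, e2, e3, e4]
  rcases eq_or_ne j k with rfl | h
  · simp only [if_pos rfl, if_true, Matrix.smul_apply, Matrix.one_apply_eq, smul_eq_mul]
    ring
  · simp only [if_neg h, Matrix.smul_apply, Matrix.one_apply_ne h, smul_eq_mul]
    ring

lemma H_dd {n : ℕ} (p v : ℕ → ℝ) (j k : Fin (2 ^ n)) :
    Hmat p v (n + 1) (dblFin j) (dblFin k) =
      lapD p (hdist (j : ℕ) (k : ℕ) + 1) + if j = k then v (2 * (j : ℕ)) else 0 := by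
  unfold Hmat
  congr 1
  · rw [show ((dblFin j : Fin (2 ^ (n + 1))) : ℕ) = 2 * (j : ℕ) + 0 from by rw [dblFin_val]; omega,
      show ((dblFin k : Fin (2 ^ (n + 1))) : ℕ) = 2 * (k : ℕ) + 0 from by rw [dblFin_val]; omega]
    exact lapEntry_double p j k 0 0 (by norm_num) (by norm_num)
  · rcases eq_or_ne j k with rfl | h
    · rw [if_pos rfl, if_pos rfl, dblFin_val]
    · rw [if_neg h, if_neg (fun hc => h (dblFin_inj.mp hc))]

lemma H_dd1 {n : ℕ} (p v : ℕ → ℝ) (j k : Fin (2 ^ n)) :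
    Hmat p v (n + 1) (dblFin j) (dblFin1 k) = lapD p (hdist (j : ℕ) (k : ℕ) + 1) := by
  unfold Hmat
  rw [if_neg (dblFin_ne j k), add_zero]
  rw [show ((dblFin j : Fin (2 ^ (n + 1))) : ℕ) = 2 * (j : ℕ) + 0 from by rw [dblFin_val]; omega,
    show ((dblFin1 k : Fin (2 ^ (n + 1))) : ℕ) = 2 * (k : ℕ) + 1 from by rw [dblFin1_val]]
  exact lapEntry_double p j k 0 1 (by norm_num) (by norm_num)

lemma H_d1d {n : ℕ} (p v : ℕ → ℝ) (j k : Fin (2 ^ n)) :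
    Hmat p v (n + 1) (dblFin1 j) (dblFin k) = lapD p (hdist (j : ℕ) (k : ℕ) + 1) := by
  unfold Hmat
  rw [if_neg (dblFin_ne k j).symm, add_zero]
  rw [show ((dblFin1 j : Fin (2 ^ (n + 1))) : ℕ) = 2 * (j : ℕ) + 1 from by rw [dblFin1_val],
    show ((dblFin k : Fin (2 ^ (n + 1))) : ℕ) = 2 * (k : ℕ) + 0 from by rw [dblFin_val]; omega]
  exact lapEntry_double p j k 1 0 (by norm_num) (by norm_num)

lemma H_d1d1 {n : ℕ} (p v : ℕ → ℝ) (j k : Fin (2 ^ n)) :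
    Hmat p v (n + 1) (dblFin1 j) (dblFin1 k) =
      lapD p (hdist (j : ℕ) (k : ℕ) + 1) + if j = k then v (2 * (j : ℕ) + 1) else 0 := by
  unfold Hmat
  congr 1
  · rw [show ((dblFin1 j : Fin (2 ^ (n + 1))) : ℕ) = 2 * (j : ℕ) + 1 from by rw [dblFin1_val],
      show ((dblFin1 k : Fin (2 ^ (n + 1))) : ℕ) = 2 * (k : ℕ) + 1 from by rw [dblFin1_val]]
    exact lapEntry_double p j k 1 1 (by norm_num) (by norm_num)
  · rcases eq_or_ne j k with rfl | h
    · rw [if_pos rfl, if_pos rfl, dblFin1_val]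
    · rw [if_neg h, if_neg (fun hc => h (dblFin1_inj.mp hc))]

/-- The compression of `H_{n+1}` to the symmetric sector. -/
def Amat (p v : ℕ → ℝ) (n : ℕ) : Matrix (Fin (2 ^ n)) (Fin (2 ^ n)) ℝ :=
  fun j k => lapD (shiftSeq p) (hdist (j : ℕ) (k : ℕ)) +
    if j = k then p 1 + (v (2 * (j : ℕ)) + v (2 * (j : ℕ) + 1)) / 2 else 0

lemma hdist_fin_ne {n : ℕ} {j k : Fin (2 ^ n)} (h : j ≠ k) : hdist (j : ℕ) (k : ℕ) ≠ 0 :=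
  fun hc => h (Fin.ext ((hdist_eq_zero_iff _ _).mp hc))

lemma EHE {n : ℕ} (p v : ℕ → ℝ) (hps : Summable p) :
    (Uemat n)ᵀ * Hmat p v (n + 1) * Uemat n = Amat p v n := by
  ext j k
  rw [compress _ _ _ _ _ _ _ Ue_dbl Ue_dbl1 Ue_dbl Ue_dbl1, H_dd, H_dd1, H_d1d, H_d1d1]
  have hs := lapD_shift p hps (hdist (j : ℕ) (k : ℕ))
  simp only [Amat]
  rcases eq_or_ne j k with rfl | h
  · rw [hdist_self] at hs ⊢
    simp only [eq_self_iff_true, if_true] at hs ⊢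
    linear_combination (4 * lapD p (0 + 1) + v (2 * (j : ℕ)) + v (2 * (j : ℕ) + 1)) * csq + hs
  · rw [if_neg (hdist_fin_ne h)] at hs
    rw [if_neg h, if_neg h, if_neg h]
    linear_combination (4 * lapD p (hdist (j : ℕ) (k : ℕ) + 1)) * csq + hs

lemma EHF {n : ℕ} (p v : ℕ → ℝ) :
    (Uemat n)ᵀ * Hmat p v (n + 1) * Ufmat n = Vfemat v n := by
  ext j k
  rw [compress _ _ _ _ _ _ _ Ue_dbl Ue_dbl1 Uf_dbl Uf_dbl1, H_dd, H_dd1, H_d1d, H_d1d1,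
    Vfemat, Matrix.diagonal_apply]
  rcases eq_or_ne j k with rfl | h
  · rw [if_pos rfl, if_pos rfl, if_pos rfl]
    linear_combination (v (2 * (j : ℕ)) - v (2 * (j : ℕ) + 1)) * csq
  · rw [if_neg h, if_neg h, if_neg h]
    ring

lemma FHE {n : ℕ} (p v : ℕ → ℝ) :
    (Ufmat n)ᵀ * Hmat p v (n + 1) * Uemat n = Vfemat v n := by
  ext j k
  rw [compress _ _ _ _ _ _ _ Uf_dbl Uf_dbl1 Ue_dbl Ue_dbl1, H_dd, H_dd1, H_d1d, H_d1d1,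
    Vfemat, Matrix.diagonal_apply]
  rcases eq_or_ne j k with rfl | h
  · rw [if_pos rfl, if_pos rfl, if_pos rfl]
    linear_combination (v (2 * (j : ℕ)) - v (2 * (j : ℕ) + 1)) * csq
  · rw [if_neg h, if_neg h, if_neg h]
    ring

lemma FHF {n : ℕ} (p v : ℕ → ℝ) :
    (Ufmat n)ᵀ * Hmat p v (n + 1) * Ufmat n = Vffmat v n := by
  ext j k
  rw [compress _ _ _ _ _ _ _ Uf_dbl Uf_dbl1 Uf_dbl Uf_dbl1, H_dd, H_dd1, H_d1d, H_d1d1,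
    Vffmat, Matrix.diagonal_apply]
  rcases eq_or_ne j k with rfl | h
  · rw [if_pos rfl, if_pos rfl, if_pos rfl]
    linear_combination (v (2 * (j : ℕ)) + v (2 * (j : ℕ) + 1)) * csq
  · rw [if_neg h, if_neg h, if_neg h]
    ring

lemma EtE {n : ℕ} : (Uemat n)ᵀ * Uemat n = 1 := by
  rw [orth _ _ _ _ _ _ Ue_dbl Ue_dbl1 Ue_dbl Ue_dbl1]
  rw [show (Real.sqrt 2)⁻¹ * (Real.sqrt 2)⁻¹ + (Real.sqrt 2)⁻¹ * (Real.sqrt 2)⁻¹ = 1 by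
    rw [csq]; norm_num]
  rw [one_smul]

lemma FtF {n : ℕ} : (Ufmat n)ᵀ * Ufmat n = 1 := by
  rw [orth _ _ _ _ _ _ Uf_dbl Uf_dbl1 Uf_dbl Uf_dbl1]
  rw [show (Real.sqrt 2)⁻¹ * (Real.sqrt 2)⁻¹ + -(Real.sqrt 2)⁻¹ * -(Real.sqrt 2)⁻¹ = 1 by
    rw [show -(Real.sqrt 2)⁻¹ * -(Real.sqrt 2)⁻¹ = (Real.sqrt 2)⁻¹ * (Real.sqrt 2)⁻¹ by ring,
      csq]; norm_num]
  rw [one_smul]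

lemma EtF {n : ℕ} : (Uemat n)ᵀ * Ufmat n = 0 := by
  rw [orth _ _ _ _ _ _ Ue_dbl Ue_dbl1 Uf_dbl Uf_dbl1]
  rw [show (Real.sqrt 2)⁻¹ * (Real.sqrt 2)⁻¹ + (Real.sqrt 2)⁻¹ * -(Real.sqrt 2)⁻¹ = 0 by ring]
  rw [zero_smul]

lemma FtE {n : ℕ} : (Ufmat n)ᵀ * Uemat n = 0 := by
  rw [orth _ _ _ _ _ _ Uf_dbl Uf_dbl1 Ue_dbl Ue_dbl1]
  rw [show (Real.sqrt 2)⁻¹ * (Real.sqrt 2)⁻¹ + -(Real.sqrt 2)⁻¹ * (Real.sqrt 2)⁻¹ = 0 by ring]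
  rw [zero_smul]

lemma completeness {n : ℕ} :
    Uemat n * (Uemat n)ᵀ + Ufmat n * (Ufmat n)ᵀ = 1 := by
  have e : Fin (2 ^ (n + 1)) ≃ Fin (2 ^ n) ⊕ Fin (2 ^ n) :=
    (finCongr (by rw [pow_succ]; ring)).trans finSumFinEquiv.symm
  have hU : Matrix.fromRows (Uemat n)ᵀ (Ufmat n)ᵀ * Matrix.fromCols (Uemat n) (Ufmat n) =
      1 := by
    rw [Matrix.fromRows_mul_fromCols, EtE, EtF, FtE, FtF, Matrix.fromBlocks_one]
  have hU2 : Matrix.fromCols (Uemat n) (Ufmat n) *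
      Matrix.fromRows (Uemat n)ᵀ (Ufmat n)ᵀ = 1 :=
    (Matrix.fromCols_mul_fromRows_eq_one_comm e _ _ _ _).mpr hU
  rw [Matrix.fromCols_mul_fromRows] at hU2
  exact hU2

lemma Amat_eq {n : ℕ} (p v : ℕ → ℝ)
    (hv : ∀ k : ℕ, k < 2 ^ n → v (2 * k) + v (2 * k + 1) ≠ 0) :
    Amat p v n = Hmat (shiftSeq p) (renPotM p v) n +
      Vfemat v n * (Vffmat v n)⁻¹ * Vfemat v n := by
  have hDinv : (Vffmat v n)⁻¹ =
      Matrix.diagonal (fun k : Fin (2 ^ n) =>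
        ((v (2 * (k : ℕ)) + v (2 * (k : ℕ) + 1)) / 2)⁻¹) := by
    apply Matrix.inv_eq_right_inv
    rw [Vffmat, Matrix.diagonal_mul_diagonal]
    ext i j
    rw [Matrix.diagonal_apply, Matrix.one_apply]
    rcases eq_or_ne i j with rfl | h
    · rw [if_pos rfl, if_pos rfl]
      exact mul_inv_cancel₀ (div_ne_zero (hv (i : ℕ) i.isLt) two_ne_zero)
    · rw [if_neg h, if_neg h]
  rw [hDinv, Vfemat, Matrix.diagonal_mul_diagonal, Matrix.diagonal_mul_diagonal]
  ext j k
  rw [Matrix.add_apply, Matrix.diagonal_apply]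
  simp only [Amat, Hmat, lapEntry_eq, renPotM]
  rcases eq_or_ne j k with rfl | h
  · rw [if_pos rfl, if_pos rfl, if_pos rfl]
    have hne := hv (j : ℕ) j.isLt
    field_simp
    ring
  · rw [if_neg h, if_neg h, if_neg h]
    ring

lemma Vff_unit {n : ℕ} (v : ℕ → ℝ)
    (hv : ∀ k : ℕ, k < 2 ^ n → v (2 * k) + v (2 * k + 1) ≠ 0) :
    IsUnit (Vffmat v n).det := by
  rw [Vffmat, Matrix.det_diagonal, isUnit_iff_ne_zero]
  apply Finset.prod_ne_zero_iff.mpr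
  intro k _
  exact div_ne_zero (hv (k : ℕ) k.isLt) two_ne_zero




end

/-- **Recovery formula** (Corollary in Section 3): for `n ≥ 1` (written `n+1` here),
`⟨φ, H_{n+1}^{-1} ψ⟩ = ⟨Sφ, (RH)_n^{-1} Sψ⟩ + ⟨U_f^* φ, V_ff^{-1} U_f^* ψ⟩` where
`S = U_e^* - V_fe V_ff^{-1} U_f^*`. -/
theorem recovery_formula (n : ℕ) (p : ℕ → ℝ) (hps : Summable p) (v : ℕ → ℝ)
    (hv : ∀ k : ℕ, k < 2 ^ n → v (2 * k) + v (2 * k + 1) ≠ 0)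
    (hH : IsUnit (Hmat p v (n + 1)).det)
    (hRH : IsUnit (Hmat (shiftSeq p) (renPotM p v) n).det)
    (φ ψ : Fin (2 ^ (n + 1)) → ℝ) :
    φ ⬝ᵥ (Hmat p v (n + 1))⁻¹.mulVec ψ =
      (Smat v n).mulVec φ ⬝ᵥ
        (Hmat (shiftSeq p) (renPotM p v) n)⁻¹.mulVec ((Smat v n).mulVec ψ) +
      (Ufmat n)ᵀ.mulVec φ ⬝ᵥ (Vffmat v n)⁻¹.mulVec ((Ufmat n)ᵀ.mulVec ψ) := by
  classical
  have hDD : Vffmat v n * (Vffmat v n)⁻¹ = 1 := Matrix.mul_nonsing_inv _ (Vff_unit v hv)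
  have hRR : Hmat (shiftSeq p) (renPotM p v) n * (Hmat (shiftSeq p) (renPotM p v) n)⁻¹ = 1 :=
    Matrix.mul_nonsing_inv _ hRH
  have hA : (Uemat n)ᵀ * Hmat p v (n + 1) * Uemat n =
      Hmat (shiftSeq p) (renPotM p v) n + Vfemat v n * (Vffmat v n)⁻¹ * Vfemat v n := by
    rw [EHE p v hps, Amat_eq p v hv]
  have hC : Uemat n * (Uemat n)ᵀ + Ufmat n * (Ufmat n)ᵀ = 1 := completeness
  have hHE : Hmat p v (n + 1) * Uemat n =
      Uemat n * (Hmat (shiftSeq p) (renPotM p v) n +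
        Vfemat v n * (Vffmat v n)⁻¹ * Vfemat v n) + Ufmat n * Vfemat v n := by
    calc Hmat p v (n + 1) * Uemat n
        = (Uemat n * (Uemat n)ᵀ + Ufmat n * (Ufmat n)ᵀ) * (Hmat p v (n + 1) * Uemat n) := by
          rw [hC, Matrix.one_mul]
      _ = Uemat n * ((Uemat n)ᵀ * Hmat p v (n + 1) * Uemat n) +
          Ufmat n * ((Ufmat n)ᵀ * Hmat p v (n + 1) * Uemat n) := by
          rw [Matrix.add_mul, Matrix.mul_assoc (Uemat n), Matrix.mul_assoc (Ufmat n),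
            ← Matrix.mul_assoc (Uemat n)ᵀ, ← Matrix.mul_assoc (Ufmat n)ᵀ]
      _ = _ := by rw [hA, FHE p v]
  have hHF : Hmat p v (n + 1) * Ufmat n = Uemat n * Vfemat v n + Ufmat n * Vffmat v n := by
    calc Hmat p v (n + 1) * Ufmat n
        = (Uemat n * (Uemat n)ᵀ + Ufmat n * (Ufmat n)ᵀ) * (Hmat p v (n + 1) * Ufmat n) := by
          rw [hC, Matrix.one_mul]
      _ = Uemat n * ((Uemat n)ᵀ * Hmat p v (n + 1) * Ufmat n) +
          Ufmat n * ((Ufmat n)ᵀ * Hmat p v (n + 1) * Ufmat n) := by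
          rw [Matrix.add_mul, Matrix.mul_assoc (Uemat n), Matrix.mul_assoc (Ufmat n),
            ← Matrix.mul_assoc (Uemat n)ᵀ, ← Matrix.mul_assoc (Ufmat n)ᵀ]
      _ = _ := by rw [EHF p v, FHF p v]
  have hSt : (Smat v n)ᵀ = Uemat n - Ufmat n * ((Vffmat v n)⁻¹ * Vfemat v n) := by
    rw [Smat, Matrix.transpose_sub, Matrix.transpose_transpose, Matrix.transpose_mul,
      Matrix.transpose_mul, Matrix.transpose_transpose, Matrix.transpose_nonsing_inv,
      show (Vffmat v n)ᵀ = Vffmat v n from Matrix.diagonal_transpose _,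
      show (Vfemat v n)ᵀ = Vfemat v n from Matrix.diagonal_transpose _]
  have hHSt : Hmat p v (n + 1) * (Smat v n)ᵀ =
      Uemat n * Hmat (shiftSeq p) (renPotM p v) n := by
    rw [hSt, Matrix.mul_sub, ← Matrix.mul_assoc (Hmat p v (n + 1)) (Ufmat n), hHF, hHE]
    rw [Matrix.mul_add, Matrix.add_mul]
    have e1 : Uemat n * Vfemat v n * ((Vffmat v n)⁻¹ * Vfemat v n) =
        Uemat n * (Vfemat v n * (Vffmat v n)⁻¹ * Vfemat v n) := by
      rw [Matrix.mul_assoc (Uemat n), ← Matrix.mul_assoc (Vfemat v n)]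
    have e2 : Ufmat n * Vffmat v n * ((Vffmat v n)⁻¹ * Vfemat v n) =
        Ufmat n * Vfemat v n := by
      rw [Matrix.mul_assoc (Ufmat n), ← Matrix.mul_assoc (Vffmat v n), hDD, Matrix.one_mul]
    rw [e1, e2]
    abel
  have h1 : Hmat p v (n + 1) *
      ((Smat v n)ᵀ * ((Hmat (shiftSeq p) (renPotM p v) n)⁻¹ * Smat v n)) =
      Uemat n * Smat v n := by
    rw [← Matrix.mul_assoc, hHSt, Matrix.mul_assoc (Uemat n),
      ← Matrix.mul_assoc (Hmat (shiftSeq p) (renPotM p v) n), hRR, Matrix.one_mul]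
  have h2 : Hmat p v (n + 1) * (Ufmat n * ((Vffmat v n)⁻¹ * (Ufmat n)ᵀ)) =
      Uemat n * (Vfemat v n * ((Vffmat v n)⁻¹ * (Ufmat n)ᵀ)) + Ufmat n * (Ufmat n)ᵀ := by
    rw [← Matrix.mul_assoc, hHF, Matrix.add_mul, Matrix.mul_assoc (Uemat n),
      Matrix.mul_assoc (Ufmat n), ← Matrix.mul_assoc (Vffmat v n), hDD, Matrix.one_mul]
  have key : Hmat p v (n + 1) *
      ((Smat v n)ᵀ * ((Hmat (shiftSeq p) (renPotM p v) n)⁻¹ * Smat v n) +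
        Ufmat n * ((Vffmat v n)⁻¹ * (Ufmat n)ᵀ)) = 1 := by
    rw [Matrix.mul_add, h1, h2]
    rw [show Smat v n = (Uemat n)ᵀ - Vfemat v n * ((Vffmat v n)⁻¹ * (Ufmat n)ᵀ) from by
      rw [Smat, Matrix.mul_assoc], Matrix.mul_sub]
    rw [← hC]
    abel
  have hinv : (Hmat p v (n + 1))⁻¹ =
      (Smat v n)ᵀ * ((Hmat (shiftSeq p) (renPotM p v) n)⁻¹ * Smat v n) +
        Ufmat n * ((Vffmat v n)⁻¹ * (Ufmat n)ᵀ) := Matrix.inv_eq_right_inv key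
  rw [hinv, Matrix.add_mulVec, dotProduct_add]
  congr 1
  · rw [← Matrix.mulVec_mulVec, ← Matrix.mulVec_mulVec, dotProduct_mulVec,
      ← Matrix.mulVec_transpose, Matrix.transpose_transpose]
  · rw [← Matrix.mulVec_mulVec, ← Matrix.mulVec_mulVec, dotProduct_mulVec,
      ← Matrix.mulVec_transpose]
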